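/- Fix γ, τ ≤ 0.1 and scaling parameters 1 ≤ ν₁ ≤ 2 and ν₂ ≥ 1. Let R₁ be the set of pairs (μ, Σ) with (μ, Σ) ≈_{γ,τ} (0, I_d), and let R₂ be the set of pairs (μ, Σ) with (μ, Σ) ≈_{ν₁·γ, ν₂·τ} (0, I_d). Then nvol(R₂) ≤ ν₁^{2d²} · ν₂^d · nvol(R₁). -/

import Mathlib

open MeasureTheory ProbabilityTheory Matrix Real
open scoped ENNReal

noncomputable section

/-- The `ℓ²`-operator norm of a real `d × d` matrix. -/
def opNorm {d : ℕ} (M : Matrix (Fin d) (Fin d) ℝ) : ℝ :=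
  ‖(Matrix.toEuclideanCLM (𝕜 := ℝ) M)‖

/-- The Frobenius norm of a real `d × d` matrix. -/
def frobNorm {d : ℕ} (M : Matrix (Fin d) (Fin d) ℝ) : ℝ :=
  Real.sqrt (∑ i, ∑ j, (M i j) ^ 2)

/-- The Euclidean norm of a vector in `ℝ^d`. -/
def vnorm {d : ℕ} (v : Fin d → ℝ) : ℝ := Real.sqrt (∑ i, (v i) ^ 2)

open scoped MatrixOrder in
/-- The positive semidefinite square root of a matrix (junk value `0` if the matrix is not
positive semidefinite). -/
def msqrt {d : ℕ} (S : Matrix (Fin d) (Fin d) ℝ) : Matrix (Fin d) (Fin d) ℝ :=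
  letI := Classical.propDecidable S.PosSemidef
  if h : S.PosSemidef then CFC.sqrt S else 0

/-- `Σ^{-1/2}`, the inverse of the positive square root. -/
def sqrtInv {d : ℕ} (S : Matrix (Fin d) (Fin d) ℝ) : Matrix (Fin d) (Fin d) ℝ :=
  (msqrt S)⁻¹

/-- `(μ̂, Σ̂) ≈_{γ,ρ,τ} (μ, Σ)`: spectral, Frobenius, and Mahalanobis closeness. -/
def approx {d : ℕ} (γ ρ τ : ℝ) (p q : (Fin d → ℝ) × Matrix (Fin d) (Fin d) ℝ) : Prop :=
  opNorm (sqrtInv q.2 * p.2 * sqrtInv q.2 - 1) ≤ γ ∧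
  frobNorm (sqrtInv q.2 * p.2 * sqrtInv q.2 - 1) ≤ ρ ∧
  vnorm (sqrtInv q.2 *ᵥ (p.1 - q.1)) ≤ τ

/-- The index set for the upper-triangular entries of a `d × d` matrix. -/
abbrev UT (d : ℕ) := { p : Fin d × Fin d // p.1 ≤ p.2 }

/-- `Proj(μ, Σ)`: the coordinates of `μ` together with the upper-triangular entries of `Σ`. -/
def proj {d : ℕ} (q : (Fin d → ℝ) × Matrix (Fin d) (Fin d) ℝ) :
    (Fin d → ℝ) × (UT d → ℝ) :=
  (q.1, fun p => q.2 p.1.1 p.1.2)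

/-- Reconstruct the determinant of the symmetric matrix from its projected coordinates. -/
def detAt {d : ℕ} (θ : (Fin d → ℝ) × (UT d → ℝ)) : ℝ :=
  (Matrix.of fun i j : Fin d =>
    if h : i ≤ j then θ.2 ⟨(i, j), h⟩ else θ.2 ⟨(j, i), le_of_not_ge h⟩).det

/-- The normalized volume `nvol(Ω) = ∫_{Proj(Ω)} det(Σ)^{-(d+2)/2} dθ`. -/
def nvol {d : ℕ} (Ω : Set ((Fin d → ℝ) × Matrix (Fin d) (Fin d) ℝ)) : ℝ≥0∞ :=
  ∫⁻ θ in proj '' Ω, ENNReal.ofReal (detAt θ ^ (-((d : ℝ) + 2) / 2)) ∂volume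

/-! ### Auxiliary material -/

set_option maxHeartbeats 1000000
set_option synthInstance.maxHeartbeats 400000

section Aux

variable {d : ℕ}

lemma opNorm_smul (c : ℝ) (M : Matrix (Fin d) (Fin d) ℝ) :
    opNorm (c • M) = |c| * opNorm M := by
  rw [opNorm, _root_.map_smul, opNorm]
  exact (norm_smul c (Matrix.toEuclideanCLM (𝕜 := ℝ) M)).trans (by rw [Real.norm_eq_abs])

lemma frobNorm_smul (c : ℝ) (M : Matrix (Fin d) (Fin d) ℝ) :
    frobNorm (c • M) = |c| * frobNorm M := by
  rw [frobNorm, frobNorm, ← Real.sqrt_sq_eq_abs, ← Real.sqrt_mul (sq_nonneg c)]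
  congr 1
  simp only [Matrix.smul_apply, smul_eq_mul, mul_pow, Finset.mul_sum]

lemma vnorm_smul (c : ℝ) (v : Fin d → ℝ) :
    vnorm (c • v) = |c| * vnorm v := by
  rw [vnorm, vnorm, ← Real.sqrt_sq_eq_abs, ← Real.sqrt_mul (sq_nonneg c)]
  congr 1
  simp only [Pi.smul_apply, smul_eq_mul, mul_pow, Finset.mul_sum]

lemma toECLM_apply (M : Matrix (Fin d) (Fin d) ℝ) (x : EuclideanSpace ℝ (Fin d)) :
    Matrix.toEuclideanCLM (𝕜 := ℝ) M x =
      (WithLp.equiv 2 (Fin d → ℝ)).symm (M *ᵥ (WithLp.equiv 2 (Fin d → ℝ) x)) := by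
  rfl

lemma eigenvalue_bound {A : Matrix (Fin d) (Fin d) ℝ} (hA : A.IsHermitian) (i : Fin d) :
    |hA.eigenvalues i - 1| ≤ opNorm (A - 1) := by
  set v := hA.eigenvectorBasis i with hvdef
  have hv : ‖v‖ = 1 := hA.eigenvectorBasis.orthonormal.1 i
  have hmul : (A - 1) *ᵥ ⇑v = (hA.eigenvalues i - 1) • ⇑v := by
    rw [Matrix.sub_mulVec, hA.mulVec_eigenvectorBasis, Matrix.one_mulVec, sub_smul, one_smul]
  have happ : Matrix.toEuclideanCLM (𝕜 := ℝ) (A - 1) v = (hA.eigenvalues i - 1) • v := by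
    rw [toECLM_apply]
    have : (WithLp.equiv 2 (Fin d → ℝ)) v = ⇑v := rfl
    rw [this, hmul]
    rfl
  calc |hA.eigenvalues i - 1| = ‖(hA.eigenvalues i - 1) • v‖ := by
        rw [norm_smul, hv, mul_one, Real.norm_eq_abs]
    _ = ‖Matrix.toEuclideanCLM (𝕜 := ℝ) (A - 1) v‖ := by rw [happ]
    _ ≤ opNorm (A - 1) * ‖v‖ := ContinuousLinearMap.le_opNorm _ v
    _ = opNorm (A - 1) := by rw [hv, mul_one]

lemma posDef_of_opNorm {A : Matrix (Fin d) (Fin d) ℝ} (hA : A.IsHermitian)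
    (h : opNorm (A - 1) < 1) : A.PosDef := by
  refine Matrix.PosDef.of_dotProduct_mulVec_pos hA fun x hx => ?_
  set y : EuclideanSpace ℝ (Fin d) := (WithLp.equiv 2 (Fin d → ℝ)).symm x with hy
  have hy0 : y ≠ 0 := fun h => hx (congrArg WithLp.ofLp h)
  have hynorm : 0 < ‖y‖ := norm_pos_iff.mpr hy0
  have h1 : (inner ℝ y (Matrix.toEuclideanCLM (𝕜 := ℝ) (A - 1) y) : ℝ) = x ⬝ᵥ ((A - 1) *ᵥ x) := by
    exact Matrix.inner_toEuclideanCLM _ _ _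
  have h3 : x ⬝ᵥ x = ‖y‖ ^ 2 := by
    rw [← real_inner_self_eq_norm_sq]
    calc x ⬝ᵥ x = x ⬝ᵥ ((1 : Matrix (Fin d) (Fin d) ℝ) *ᵥ x) := by rw [Matrix.one_mulVec]
      _ = inner ℝ y (Matrix.toEuclideanCLM (𝕜 := ℝ) 1 y) := (Matrix.inner_toEuclideanCLM 1 y y).symm
      _ = inner ℝ y y := by rw [map_one]; rfl
  have h2 : star x ⬝ᵥ (A *ᵥ x) =
      ‖y‖ ^ 2 + (inner ℝ y (Matrix.toEuclideanCLM (𝕜 := ℝ) (A - 1) y) : ℝ) := by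
    rw [star_trivial, h1, ← h3, Matrix.sub_mulVec, Matrix.one_mulVec, dotProduct_sub]
    ring
  have bnd : |(inner ℝ y (Matrix.toEuclideanCLM (𝕜 := ℝ) (A - 1) y) : ℝ)|
      ≤ opNorm (A - 1) * ‖y‖ ^ 2 := by
    calc |(inner ℝ y (Matrix.toEuclideanCLM (𝕜 := ℝ) (A - 1) y) : ℝ)|
        ≤ ‖y‖ * ‖Matrix.toEuclideanCLM (𝕜 := ℝ) (A - 1) y‖ := abs_real_inner_le_norm _ _
      _ ≤ ‖y‖ * (opNorm (A - 1) * ‖y‖) :=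
          mul_le_mul_of_nonneg_left (ContinuousLinearMap.le_opNorm _ y) (norm_nonneg y)
      _ = opNorm (A - 1) * ‖y‖ ^ 2 := by ring
  rw [h2]
  have h4 := (abs_le.mp bnd).1
  have hsq : 0 < ‖y‖ ^ 2 := by positivity
  nlinarith [mul_pos (sub_pos.mpr h) hsq]

lemma det_eq_prod_eigen {A : Matrix (Fin d) (Fin d) ℝ} (hA : A.IsHermitian) :
    A.det = ∏ i, hA.eigenvalues i := by
  simpa using hA.det_eq_prod_eigenvalues

lemma det_dilate {A : Matrix (Fin d) (Fin d) ℝ} (hA : A.IsHermitian) (c : ℝ) :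
    (1 + c • (A - 1)).det = ∏ i, (1 + c * (hA.eigenvalues i - 1)) := by
  set U : Matrix (Fin d) (Fin d) ℝ := (hA.eigenvectorUnitary : Matrix (Fin d) (Fin d) ℝ) with hUdef
  have hUU : U * star U = 1 := Matrix.mem_unitaryGroup_iff.mp hA.eigenvectorUnitary.2
  set D : Matrix (Fin d) (Fin d) ℝ := Matrix.diagonal (RCLike.ofReal ∘ hA.eigenvalues) with hDdef
  have hU : A = U * D * star U := hA.spectral_theorem
  have hdiag : (1 : Matrix (Fin d) (Fin d) ℝ) + c • (D - 1) =
      Matrix.diagonal (fun i => 1 + c * (hA.eigenvalues i - 1)) := by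
    ext i j
    rcases eq_or_ne i j with rfl | hij
    · simp [D, Matrix.diagonal_apply_eq, Matrix.one_apply_eq, Function.comp]
    · simp [D, Matrix.diagonal_apply_ne _ hij, Matrix.one_apply_ne hij]
  have key : (1 : Matrix (Fin d) (Fin d) ℝ) + c • (A - 1) =
      U * Matrix.diagonal (fun i => 1 + c * (hA.eigenvalues i - 1)) * star U := by
    rw [← hdiag]
    have expand : U * (1 + c • (D - 1)) * star U
        = U * star U + c • (U * D * star U - U * star U) := by
      rw [mul_add, add_mul, mul_one, Matrix.mul_smul, Matrix.smul_mul, mul_sub, sub_mul, mul_one,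
        smul_sub]
    rw [expand, hUU, ← hU]
  rw [key, Matrix.det_mul, Matrix.det_mul]
  have hdetU : U.det * (star U).det = 1 := by rw [← Matrix.det_mul, hUU, Matrix.det_one]
  calc U.det * (Matrix.diagonal fun i => 1 + c * (hA.eigenvalues i - 1)).det * (star U).det
      = (Matrix.diagonal fun i => 1 + c * (hA.eigenvalues i - 1)).det
          * (U.det * (star U).det) := by ring
    _ = ∏ i, (1 + c * (hA.eigenvalues i - 1)) := by rw [hdetU, mul_one, Matrix.det_diagonal]

lemma det_pair {A : Matrix (Fin d) (Fin d) ℝ} (hA : A.IsHermitian) {γ ν₁ : ℝ}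
    (hγ0 : 0 < γ) (hγ : γ ≤ 0.1) (hν₁ : 1 ≤ ν₁) (hν₁' : ν₁ ≤ 2)
    (hop : opNorm (A - 1) ≤ γ) :
    0 < A.det ∧ 0 < (1 + ν₁ • (A - 1)).det ∧
      A.det ≤ (1 + (ν₁ - 1) / 8) ^ d * (1 + ν₁ • (A - 1)).det := by
  have hev : ∀ i, |hA.eigenvalues i - 1| ≤ γ := fun i => (eigenvalue_bound hA i).trans hop
  have hevpos : ∀ i, 0 < hA.eigenvalues i := by
    intro i; have := abs_le.mp (hev i); nlinarith [this.1]
  have hBpos : ∀ i, 0 < 1 + ν₁ * (hA.eigenvalues i - 1) := by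
    intro i; have := abs_le.mp (hev i); nlinarith [this.1, this.2]
  have hfac : ∀ i, hA.eigenvalues i ≤ (1 + (ν₁ - 1) / 8) * (1 + ν₁ * (hA.eigenvalues i - 1)) := by
    intro i
    have hu := (abs_le.mp (hev i)).1
    nlinarith [mul_nonneg (sub_nonneg.mpr hν₁) (by linarith : (0:ℝ) ≤ hA.eigenvalues i - 1 + γ),
      mul_nonneg (mul_nonneg (sub_nonneg.mpr hν₁) (by linarith : (0:ℝ) ≤ ν₁))
        (by linarith : (0:ℝ) ≤ hA.eigenvalues i - 1 + γ),
      mul_nonneg (sub_nonneg.mpr hν₁) (by linarith : (0:ℝ) ≤ 0.1 - γ),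
      mul_nonneg (mul_nonneg (sub_nonneg.mpr hν₁) (sub_nonneg.mpr hν₁))
        (by linarith : (0:ℝ) ≤ 0.1 - γ),
      mul_nonneg (sub_nonneg.mpr hν₁) (by linarith : (0:ℝ) ≤ 2 - ν₁)]
  refine ⟨?_, ?_, ?_⟩
  · rw [det_eq_prod_eigen hA]; exact Finset.prod_pos fun i _ => hevpos i
  · rw [det_dilate hA]; exact Finset.prod_pos fun i _ => hBpos i
  · rw [det_eq_prod_eigen hA, det_dilate hA]
    calc ∏ i, hA.eigenvalues i
        ≤ ∏ i, (1 + (ν₁ - 1) / 8) * (1 + ν₁ * (hA.eigenvalues i - 1)) :=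
          Finset.prod_le_prod (fun i _ => (hevpos i).le) (fun i _ => hfac i)
      _ = (1 + (ν₁ - 1) / 8) ^ d * ∏ i, (1 + ν₁ * (hA.eigenvalues i - 1)) := by
          rw [Finset.prod_mul_distrib, Finset.prod_const, Finset.card_univ, Fintype.card_fin]

open scoped MatrixOrder in
lemma msqrt_one : msqrt (1 : Matrix (Fin d) (Fin d) ℝ) = 1 := by
  rw [msqrt]
  rw [dif_pos Matrix.PosSemidef.one]
  exact CFC.sqrt_one

lemma sqrtInv_one : sqrtInv (1 : Matrix (Fin d) (Fin d) ℝ) = 1 := by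
  rw [sqrtInv, msqrt_one, inv_one]

lemma approx_one_iff (γ ρ τ : ℝ) (p : (Fin d → ℝ) × Matrix (Fin d) (Fin d) ℝ) :
    approx γ ρ τ p (0, 1) ↔
      opNorm (p.2 - 1) ≤ γ ∧ frobNorm (p.2 - 1) ≤ ρ ∧ vnorm p.1 ≤ τ := by
  rw [approx]
  simp [sqrtInv_one, Matrix.one_mulVec]

/-- Reconstruction of a symmetric matrix from its upper-triangular data. -/
def mat {d : ℕ} (y : UT d → ℝ) : Matrix (Fin d) (Fin d) ℝ :=
  Matrix.of fun i j : Fin d =>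
    if h : i ≤ j then y ⟨(i, j), h⟩ else y ⟨(j, i), le_of_not_ge h⟩

lemma detAt_eq (θ : (Fin d → ℝ) × (UT d → ℝ)) : detAt θ = (mat θ.2).det := rfl

lemma mat_isHermitian (y : UT d → ℝ) : (mat y).IsHermitian := by
  ext i j
  simp only [Matrix.conjTranspose_apply, star_trivial, mat, Matrix.of_apply]
  by_cases h1 : i ≤ j
  · by_cases h2 : j ≤ i
    · obtain rfl := le_antisymm h1 h2
      rfl
    · rw [dif_neg h2, dif_pos h1]
  · rw [dif_pos (le_of_not_ge h1), dif_neg h1]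

lemma mat_proj (q : (Fin d → ℝ) × Matrix (Fin d) (Fin d) ℝ) (hq : q.2.IsHermitian) :
    mat (proj q).2 = q.2 := by
  ext i j
  simp only [mat, proj, Matrix.of_apply]
  split_ifs with h
  · rfl
  · exact hq.apply i j ▸ (star_trivial _)

lemma proj_mat (x : Fin d → ℝ) (y : UT d → ℝ) : proj (x, mat y) = (x, y) := by
  refine Prod.ext rfl ?_
  funext p
  simp only [proj, mat, Matrix.of_apply]
  rw [dif_pos p.2]

end Aux
section Measure

/-- The projected parameter space. -/
abbrev Pspace (d : ℕ) := (Fin d → ℝ) × (UT d → ℝ)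

lemma det_prodMap' {ι κ : Type*} [Fintype ι] [DecidableEq ι] [Fintype κ] [DecidableEq κ]
    (f : (ι → ℝ) →ₗ[ℝ] (ι → ℝ)) (g : (κ → ℝ) →ₗ[ℝ] (κ → ℝ)) :
    LinearMap.det (f.prodMap g) = LinearMap.det f * LinearMap.det g := by
  rw [← LinearMap.det_toMatrix ((Pi.basisFun ℝ ι).prod (Pi.basisFun ℝ κ)),
    LinearMap.toMatrix_prodMap, Matrix.det_fromBlocks_zero₂₁,
    LinearMap.det_toMatrix, LinearMap.det_toMatrix]

lemma det_smul_id {ι : Type*} [Fintype ι] [DecidableEq ι] (c : ℝ) :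
    LinearMap.det (c • (LinearMap.id : (ι → ℝ) →ₗ[ℝ] (ι → ℝ))) = c ^ Fintype.card ι := by
  rw [LinearMap.det_smul, LinearMap.det_id, mul_one, Module.finrank_pi]

variable (d : ℕ)

instance : MeasureTheory.Measure.IsAddHaarMeasure (volume : Measure (Pspace d)) := by
  rw [Measure.volume_eq_prod]
  exact Measure.prod.instIsAddHaarMeasure _ _

/-- The linear part of the dilation map. -/
def Lmap (ν₂ ν₁ : ℝ) : Pspace d →ₗ[ℝ] Pspace d :=
  (ν₂ • (LinearMap.id : (Fin d → ℝ) →ₗ[ℝ] (Fin d → ℝ))).prodMap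
    (ν₁ • (LinearMap.id : (UT d → ℝ) →ₗ[ℝ] (UT d → ℝ)))

/-- The translation part of the dilation map. -/
def zvec (ν₁ : ℝ) : Pspace d :=
  (0, fun p => if p.1.1 = p.1.2 then 1 - ν₁ else 0)

/-- The dilation map on projected coordinates. -/
def Psi (ν₂ ν₁ : ℝ) : Pspace d → Pspace d := fun θ => Lmap d ν₂ ν₁ θ + zvec d ν₁

lemma Psi_eq (ν₂ ν₁ : ℝ) (θ : Pspace d) :
    Psi d ν₂ ν₁ θ = (ν₂ • θ.1, ν₁ • θ.2 + (zvec d ν₁).2) := by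
  rw [Psi, Lmap]
  refine Prod.ext ?_ ?_
  · simp [zvec, LinearMap.prodMap_apply]
  · simp [LinearMap.prodMap_apply]

lemma Lmap_det (ν₂ ν₁ : ℝ) :
    LinearMap.det (Lmap d ν₂ ν₁) = ν₂ ^ d * ν₁ ^ Fintype.card (UT d) := by
  rw [Lmap, det_prodMap', det_smul_id, det_smul_id, Fintype.card_fin]

lemma Psi_measurable (ν₂ ν₁ : ℝ) : Measurable (Psi d ν₂ ν₁) :=
  (((Lmap d ν₂ ν₁).continuous_of_finiteDimensional).add continuous_const).measurable

lemma Psi_injective {ν₂ ν₁ : ℝ} (h₂ : 0 < ν₂) (h₁ : 0 < ν₁) :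
    Function.Injective (Psi d ν₂ ν₁) := by
  have hleft : ∀ θ : Pspace d,
      ((ν₂⁻¹ • (Psi d ν₂ ν₁ θ).1, ν₁⁻¹ • ((Psi d ν₂ ν₁ θ).2 - (zvec d ν₁).2)) : Pspace d) = θ := by
    intro θ
    rw [Psi_eq]
    refine Prod.ext ?_ ?_
    · simp only [smul_smul, inv_mul_cancel₀ h₂.ne', one_smul]
    · simp only [add_sub_cancel_right, smul_smul, inv_mul_cancel₀ h₁.ne', one_smul]
  intro a b hab
  rw [← hleft a, ← hleft b, hab]

lemma map_measure_eq (ν₂ ν₁ : ℝ) (h₂ : 0 < ν₂) (h₁ : 0 < ν₁) :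
    Measure.map (Psi d ν₂ ν₁) (volume : Measure (Pspace d)) =
      ENNReal.ofReal ((ν₂ ^ d * ν₁ ^ Fintype.card (UT d))⁻¹) • volume := by
  have hdet : LinearMap.det (Lmap d ν₂ ν₁) ≠ 0 := by
    rw [Lmap_det]; positivity
  have h1 : Measure.map (Lmap d ν₂ ν₁) (volume : Measure (Pspace d)) =
      ENNReal.ofReal |(LinearMap.det (Lmap d ν₂ ν₁))⁻¹| • volume :=
    Measure.map_linearMap_addHaar_eq_smul_addHaar volume hdet
  have hcomp : Psi d ν₂ ν₁ = (fun θ => θ + zvec d ν₁) ∘ (Lmap d ν₂ ν₁) := rfl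
  rw [hcomp, ← Measure.map_map (measurable_add_const (zvec d ν₁))
      (Lmap d ν₂ ν₁).continuous_of_finiteDimensional.measurable,
    h1, Measure.map_smul, map_add_right_eq_self, Lmap_det]
  congr 1
  rw [abs_of_pos (by positivity)]

/-- Description of the projected approximation region. -/
def Sset (γ ρ τ : ℝ) : Set (Pspace d) :=
  {θ | opNorm (mat θ.2 - 1) ≤ γ ∧ frobNorm (mat θ.2 - 1) ≤ ρ ∧ vnorm θ.1 ≤ τ}

lemma proj_image {γ ρ τ : ℝ} (hγ1 : γ < 1) :
    proj '' {p : (Fin d → ℝ) × Matrix (Fin d) (Fin d) ℝ |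
        p.2.PosDef ∧ approx γ ρ τ p (0, 1)} = Sset d γ ρ τ := by
  ext θ
  constructor
  · rintro ⟨p, ⟨hpd, happ⟩, rfl⟩
    rw [approx_one_iff] at happ
    have hm : mat (proj p).2 = p.2 := mat_proj p hpd.1
    exact ⟨by rw [hm]; exact happ.1, by rw [hm]; exact happ.2.1, happ.2.2⟩
  · rintro ⟨h1, h2, h3⟩
    refine ⟨(θ.1, mat θ.2), ⟨?_, ?_⟩, ?_⟩
    · exact posDef_of_opNorm (mat_isHermitian θ.2) (lt_of_le_of_lt h1 hγ1)
    · rw [approx_one_iff]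
      exact ⟨h1, h2, h3⟩
    · exact (proj_mat θ.1 θ.2).trans rfl

lemma mat_Psi (ν₂ ν₁ : ℝ) (θ : Pspace d) :
    mat ((Psi d ν₂ ν₁ θ).2) = 1 + ν₁ • (mat θ.2 - 1) := by
  have h := Psi_eq d ν₂ ν₁ θ
  rw [h]
  ext i j
  simp only [mat, Matrix.of_apply, Matrix.add_apply, Matrix.smul_apply, Matrix.sub_apply,
    Matrix.one_apply, smul_eq_mul, Pi.add_apply, Pi.smul_apply, zvec]
  by_cases hle : i ≤ j
  · rw [dif_pos hle, dif_pos hle]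
    by_cases hij : i = j <;> simp [hij] <;> ring
  · have hij : ¬ (i = j) := fun he => hle (le_of_eq he)
    have hji : ¬ (j = i) := fun he => hle (le_of_eq he.symm)
    rw [dif_neg hle, dif_neg hle]
    simp [hij, hji]

lemma image_Psi {γ τ ν₂ ν₁ : ℝ} (h₂ : 0 < ν₂) (h₁ : 0 < ν₁) :
    Psi d ν₂ ν₁ '' Sset d γ (Real.sqrt d * γ) τ
      = Sset d (ν₁ * γ) (Real.sqrt d * (ν₁ * γ)) (ν₂ * τ) := by
  ext θ'
  constructor
  · rintro ⟨θ, ⟨h1, h2, h3⟩, rfl⟩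
    have hm : mat ((Psi d ν₂ ν₁ θ).2) - 1 = ν₁ • (mat θ.2 - 1) := by
      rw [mat_Psi, add_sub_cancel_left]
    have hfst : (Psi d ν₂ ν₁ θ).1 = ν₂ • θ.1 := by rw [Psi_eq]
    refine ⟨?_, ?_, ?_⟩
    · rw [hm, opNorm_smul, abs_of_pos h₁]
      exact mul_le_mul_of_nonneg_left h1 h₁.le
    · rw [hm, frobNorm_smul, abs_of_pos h₁]
      calc ν₁ * frobNorm (mat θ.2 - 1) ≤ ν₁ * (Real.sqrt d * γ) :=
            mul_le_mul_of_nonneg_left h2 h₁.le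
        _ = Real.sqrt d * (ν₁ * γ) := by ring
    · rw [hfst, vnorm_smul, abs_of_pos h₂]
      exact mul_le_mul_of_nonneg_left h3 h₂.le
  · rintro ⟨h1, h2, h3⟩
    set ζ : Pspace d := (ν₂⁻¹ • θ'.1, ν₁⁻¹ • (θ'.2 - (zvec d ν₁).2)) with hζ
    have hΨζ : Psi d ν₂ ν₁ ζ = θ' := by
      rw [Psi_eq]
      refine Prod.ext ?_ ?_
      · simp only [hζ, smul_smul, mul_inv_cancel₀ h₂.ne', one_smul]
      · simp only [hζ, smul_smul, mul_inv_cancel₀ h₁.ne', one_smul, sub_add_cancel]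
    have hmζ : mat ζ.2 - 1 = ν₁⁻¹ • (mat θ'.2 - 1) := by
      have := mat_Psi d ν₂ ν₁ ζ
      rw [hΨζ] at this
      rw [this, add_sub_cancel_left, smul_smul, inv_mul_cancel₀ h₁.ne', one_smul]
    refine ⟨ζ, ⟨?_, ?_, ?_⟩, hΨζ⟩
    · rw [hmζ, opNorm_smul, abs_of_pos (inv_pos.mpr h₁)]
      calc ν₁⁻¹ * opNorm (mat θ'.2 - 1) ≤ ν₁⁻¹ * (ν₁ * γ) :=
            mul_le_mul_of_nonneg_left h1 (inv_pos.mpr h₁).le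
        _ = γ := by field_simp
    · rw [hmζ, frobNorm_smul, abs_of_pos (inv_pos.mpr h₁)]
      calc ν₁⁻¹ * frobNorm (mat θ'.2 - 1) ≤ ν₁⁻¹ * (Real.sqrt d * (ν₁ * γ)) :=
            mul_le_mul_of_nonneg_left h2 (inv_pos.mpr h₁).le
        _ = Real.sqrt d * γ := by field_simp
    · have : ζ.1 = ν₂⁻¹ • θ'.1 := rfl
      rw [this, vnorm_smul, abs_of_pos (inv_pos.mpr h₂)]
      calc ν₂⁻¹ * vnorm θ'.1 ≤ ν₂⁻¹ * (ν₂ * τ) :=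
            mul_le_mul_of_nonneg_left h3 (inv_pos.mpr h₂).le
        _ = τ := by field_simp

lemma cont_mat : Continuous fun θ : Pspace d => mat θ.2 := by
  apply continuous_matrix
  intro i j
  by_cases h : i ≤ j
  · simp only [mat, Matrix.of_apply, dif_pos h]
    exact (continuous_apply _).comp continuous_snd
  · simp only [mat, Matrix.of_apply, dif_neg h]
    exact (continuous_apply _).comp continuous_snd

lemma cont_opNorm : Continuous fun M : Matrix (Fin d) (Fin d) ℝ => opNorm M := by
  let lin : Matrix (Fin d) (Fin d) ℝ →ₗ[ℝ]
      (EuclideanSpace ℝ (Fin d) →L[ℝ] EuclideanSpace ℝ (Fin d)) :=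
    { toFun := fun M => Matrix.toEuclideanCLM (𝕜 := ℝ) M,
      map_add' := fun a b => map_add _ a b,
      map_smul' := fun c a => _root_.map_smul _ c a }
  exact continuous_norm.comp lin.continuous_of_finiteDimensional

lemma Sset_measurable (γ ρ τ : ℝ) : MeasurableSet (Sset d γ ρ τ) := by
  have hmat1 : Continuous fun θ : Pspace d => mat θ.2 - 1 := (cont_mat d).sub continuous_const
  have hop : Continuous fun θ : Pspace d => opNorm (mat θ.2 - 1) := (cont_opNorm d).comp hmat1
  have hfr : Continuous fun θ : Pspace d => frobNorm (mat θ.2 - 1) := by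
    apply Real.continuous_sqrt.comp
    exact continuous_finset_sum _ fun i _ => continuous_finset_sum _ fun j _ =>
      ((hmat1.matrix_elem i j).pow 2)
  have hvn : Continuous fun θ : Pspace d => vnorm θ.1 := by
    apply Real.continuous_sqrt.comp
    exact continuous_finset_sum _ fun i _ =>
      (((continuous_apply i).comp continuous_fst).pow 2)
  have : Sset d γ ρ τ = (fun θ : Pspace d => opNorm (mat θ.2 - 1)) ⁻¹' (Set.Iic γ)
      ∩ ((fun θ : Pspace d => frobNorm (mat θ.2 - 1)) ⁻¹' (Set.Iic ρ)
        ∩ (fun θ : Pspace d => vnorm θ.1) ⁻¹' (Set.Iic τ)) := rfl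
  rw [this]
  exact ((isClosed_Iic.preimage hop).measurableSet).inter
    (((isClosed_Iic.preimage hfr).measurableSet).inter
      ((isClosed_Iic.preimage hvn).measurableSet))

lemma g_measurable : Measurable fun θ : Pspace d =>
    ENNReal.ofReal (detAt θ ^ (-((d : ℝ) + 2) / 2)) := by
  have hdet : Continuous fun θ : Pspace d => detAt θ := by
    have : Continuous fun θ : Pspace d => (mat θ.2).det := (cont_mat d).matrix_det
    exact this
  have hrpow : Measurable fun t : ℝ => t ^ (-((d : ℝ) + 2) / 2) :=
    measurable_of_continuousOn_compl_singleton (0 : ℝ)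
      (fun x hx => (Real.continuousAt_rpow_const x _ (Or.inl hx)).continuousWithinAt)
  exact ENNReal.measurable_ofReal.comp (hrpow.comp hdet.measurable)

end Measure

section Main

/-- The density integrand of `nvol`. -/
def gdens (d : ℕ) : Pspace d → ℝ≥0∞ :=
  fun θ => ENNReal.ofReal (detAt θ ^ (-((d : ℝ) + 2) / 2))

lemma nvol_eq {d : ℕ} (Ω : Set ((Fin d → ℝ) × Matrix (Fin d) (Fin d) ℝ)) :
    nvol Ω = ∫⁻ θ in proj '' Ω, gdens d θ ∂volume := rfl

lemma gdens_measurable (d : ℕ) : Measurable (gdens d) := g_measurable d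

lemma g_pointwise (d : ℕ) {γ ν₁ ν₂ : ℝ} (hγ0 : 0 < γ) (hγ : γ ≤ 0.1) (hν₁ : 1 ≤ ν₁)
    (hν₁' : ν₁ ≤ 2) (θ : Pspace d) (hθ : opNorm (mat θ.2 - 1) ≤ γ) :
    gdens d (Psi d ν₂ ν₁ θ) ≤
      ENNReal.ofReal (ν₁ ^ ((d : ℝ) * ((d : ℝ) + 2) / 4)) * gdens d θ := by
  have hA : (mat θ.2).IsHermitian := mat_isHermitian θ.2
  obtain ⟨hdA, hdB, hle⟩ := det_pair hA hγ0 hγ hν₁ hν₁' hθ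
  set e : ℝ := -((d : ℝ) + 2) / 2 with hedef
  set r : ℝ := (d : ℝ) * ((d : ℝ) + 2) / 4 with hrdef
  set κ : ℝ := 1 + (ν₁ - 1) / 8 with hκdef
  have hκ0 : 0 < κ := by rw [hκdef]; linarith
  have he : e ≤ 0 := by
    rw [hedef]
    have : (0:ℝ) ≤ ((d : ℝ) + 2) / 2 := by positivity
    linarith
  have hr0 : 0 ≤ r := by rw [hrdef]; positivity
  set A : Matrix (Fin d) (Fin d) ℝ := mat θ.2 with hAdef
  set B : Matrix (Fin d) (Fin d) ℝ := 1 + ν₁ • (A - 1) with hBdef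
  have hBdet : detAt (Psi d ν₂ ν₁ θ) = B.det := by
    rw [detAt_eq, mat_Psi]
  have hAdet : detAt θ = A.det := detAt_eq θ
  rw [gdens, gdens, hBdet, hAdet]
  have hdiv : A.det / κ ^ d ≤ B.det := by
    rw [div_le_iff₀ (pow_pos hκ0 d), mul_comm]
    exact hle
  have h2 : B.det ^ e ≤ (A.det / κ ^ d) ^ e :=
    Real.rpow_le_rpow_of_nonpos (by positivity) hdiv he
  have h3 : (A.det / κ ^ d) ^ e = A.det ^ e * ((κ ^ d) ^ (-e)) := by
    rw [Real.div_rpow hdA.le (by positivity), Real.rpow_neg (by positivity), div_eq_mul_inv]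
  have h4 : ((κ : ℝ) ^ d) ^ (-e) = κ ^ (2 * r) := by
    rw [← Real.rpow_natCast κ d, ← Real.rpow_mul hκ0.le]
    congr 1
    rw [hedef, hrdef]
    ring
  have h5 : κ ^ (2 * r) ≤ ν₁ ^ r := by
    have hmul : κ ^ (2 * r) = (κ ^ 2) ^ r := by
      rw [Real.rpow_mul hκ0.le]
      norm_num
    rw [hmul]
    refine Real.rpow_le_rpow (by positivity) ?_ hr0
    rw [hκdef]
    nlinarith
  have hchain : B.det ^ e ≤ ν₁ ^ r * A.det ^ e := by
    have hAe : 0 ≤ A.det ^ e := Real.rpow_nonneg hdA.le e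
    calc B.det ^ e ≤ A.det ^ e * ((κ ^ d) ^ (-e)) := h3 ▸ h2
      _ = A.det ^ e * κ ^ (2 * r) := by rw [h4]
      _ ≤ A.det ^ e * ν₁ ^ r := mul_le_mul_of_nonneg_left h5 hAe
      _ = ν₁ ^ r * A.det ^ e := by ring
  calc ENNReal.ofReal (B.det ^ e) ≤ ENNReal.ofReal (ν₁ ^ r * A.det ^ e) :=
        ENNReal.ofReal_le_ofReal hchain
    _ = ENNReal.ofReal (ν₁ ^ r) * ENNReal.ofReal (A.det ^ e) :=
        ENNReal.ofReal_mul (by positivity)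

lemma const_bound (d : ℕ) {ν₁ ν₂ : ℝ} (hν₁ : 1 ≤ ν₁) (hν₂ : 1 ≤ ν₂) :
    ENNReal.ofReal (ν₂ ^ d * ν₁ ^ Fintype.card (UT d))
        * ENNReal.ofReal (ν₁ ^ ((d : ℝ) * ((d : ℝ) + 2) / 4))
      ≤ ENNReal.ofReal (ν₁ ^ (2 * d ^ 2) * ν₂ ^ d) := by
  have h₁0 : (0:ℝ) < ν₁ := lt_of_lt_of_le one_pos hν₁
  have h₂0 : (0:ℝ) < ν₂ := lt_of_lt_of_le one_pos hν₂
  rw [← ENNReal.ofReal_mul (by positivity)]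
  apply ENNReal.ofReal_le_ofReal
  have hcard : Fintype.card (UT d) ≤ d * d := by
    calc Fintype.card (UT d) ≤ Fintype.card (Fin d × Fin d) := Fintype.card_subtype_le _
      _ = d * d := by simp [Fintype.card_prod]
  have hk : (Fintype.card (UT d) : ℝ) ≤ (d : ℝ) ^ 2 := by
    have := (Nat.cast_le (α := ℝ)).mpr hcard
    push_cast at this
    nlinarith [this]
  have hr : (d : ℝ) * ((d : ℝ) + 2) / 4 ≤ (d : ℝ) ^ 2 := by
    rcases Nat.eq_zero_or_pos d with rfl | hd
    · norm_num
    · have hd1 : (1:ℝ) ≤ (d : ℝ) := by exact_mod_cast hd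
      nlinarith
  have hexp : (Fintype.card (UT d) : ℝ) + (d : ℝ) * ((d : ℝ) + 2) / 4
      ≤ ((2 * d ^ 2 : ℕ) : ℝ) := by
    push_cast
    nlinarith [hk, hr]
  calc ν₂ ^ d * ν₁ ^ Fintype.card (UT d) * ν₁ ^ ((d : ℝ) * ((d : ℝ) + 2) / 4)
      = ν₂ ^ d * (ν₁ ^ ((Fintype.card (UT d) : ℝ))
          * ν₁ ^ ((d : ℝ) * ((d : ℝ) + 2) / 4)) := by
        rw [Real.rpow_natCast]
        ring
    _ = ν₂ ^ d * ν₁ ^ ((Fintype.card (UT d) : ℝ) + (d : ℝ) * ((d : ℝ) + 2) / 4) := by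
        rw [← Real.rpow_add h₁0]
    _ ≤ ν₂ ^ d * ν₁ ^ (((2 * d ^ 2 : ℕ) : ℝ)) := by
        exact mul_le_mul_of_nonneg_left (Real.rpow_le_rpow_of_exponent_le hν₁ hexp)
          (by positivity)
    _ = ν₁ ^ (2 * d ^ 2) * ν₂ ^ d := by
        rw [Real.rpow_natCast]
        ring

end Main

/-- Lemma: normalized-volume ratio of dilated approximation neighborhoods of `(0, I)`. -/
theorem nvol_dilation_ratio (d : ℕ) (γ τ : ℝ) (hγ0 : 0 < γ) (hγ : γ ≤ 0.1)
    (hτ0 : 0 < τ) (hτ : τ ≤ 0.1)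
    (ν₁ ν₂ : ℝ) (hν₁ : 1 ≤ ν₁) (hν₁' : ν₁ ≤ 2) (hν₂ : 1 ≤ ν₂) :
    nvol {p : (Fin d → ℝ) × Matrix (Fin d) (Fin d) ℝ |
        p.2.PosDef ∧ approx (ν₁ * γ) (Real.sqrt d * (ν₁ * γ)) (ν₂ * τ) p (0, 1)} ≤
      ENNReal.ofReal (ν₁ ^ (2 * d ^ 2) * ν₂ ^ d) *
        nvol {p : (Fin d → ℝ) × Matrix (Fin d) (Fin d) ℝ |
          p.2.PosDef ∧ approx γ (Real.sqrt d * γ) τ p (0, 1)} := by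
  classical
  have h₁0 : (0:ℝ) < ν₁ := lt_of_lt_of_le one_pos hν₁
  have h₂0 : (0:ℝ) < ν₂ := lt_of_lt_of_le one_pos hν₂
  set J : ℝ := ν₂ ^ d * ν₁ ^ Fintype.card (UT d) with hJdef
  have hJ0 : 0 < J := by rw [hJdef]; positivity
  set C₂ : ℝ≥0∞ := ENNReal.ofReal (ν₁ ^ ((d : ℝ) * ((d : ℝ) + 2) / 4)) with hC₂def
  set S : Set (Pspace d) := Sset d γ (Real.sqrt d * γ) τ with hSdef
  set T : Set (Pspace d) := Sset d (ν₁ * γ) (Real.sqrt d * (ν₁ * γ)) (ν₂ * τ) with hTdef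
  have hproj1 : proj '' {p : (Fin d → ℝ) × Matrix (Fin d) (Fin d) ℝ |
      p.2.PosDef ∧ approx γ (Real.sqrt d * γ) τ p (0, 1)} = S :=
    proj_image d (by linarith)
  have hproj2 : proj '' {p : (Fin d → ℝ) × Matrix (Fin d) (Fin d) ℝ |
      p.2.PosDef ∧ approx (ν₁ * γ) (Real.sqrt d * (ν₁ * γ)) (ν₂ * τ) p (0, 1)} = T :=
    proj_image d (by nlinarith)
  have hTS : T = Psi d ν₂ ν₁ '' S := (image_Psi d h₂0 h₁0).symm
  have hSmeas : MeasurableSet S := Sset_measurable d _ _ _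
  have hTmeas : MeasurableSet T := Sset_measurable d _ _ _
  have hgmeas : Measurable (gdens d) := gdens_measurable d
  have hΨmeas : Measurable (Psi d ν₂ ν₁) := Psi_measurable d ν₂ ν₁
  have hinj : Function.Injective (Psi d ν₂ ν₁) := Psi_injective d h₂0 h₁0
  have hμ : (volume : Measure (Pspace d))
      = ENNReal.ofReal J • Measure.map (Psi d ν₂ ν₁) volume := by
    rw [map_measure_eq d ν₂ ν₁ h₂0 h₁0, smul_smul, ← ENNReal.ofReal_mul hJ0.le,
      mul_inv_cancel₀ hJ0.ne', ENNReal.ofReal_one, one_smul]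
  have hpoint : ∀ θ ∈ S, gdens d (Psi d ν₂ ν₁ θ) ≤ C₂ * gdens d θ := fun θ hθ =>
    g_pointwise d hγ0 hγ hν₁ hν₁' θ hθ.1
  calc nvol {p : (Fin d → ℝ) × Matrix (Fin d) (Fin d) ℝ |
        p.2.PosDef ∧ approx (ν₁ * γ) (Real.sqrt d * (ν₁ * γ)) (ν₂ * τ) p (0, 1)}
      = ∫⁻ θ in T, gdens d θ ∂volume := by rw [nvol_eq, hproj2]
    _ = ∫⁻ θ, T.indicator (gdens d) θ ∂volume := (lintegral_indicator hTmeas _).symm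
    _ = ENNReal.ofReal J * ∫⁻ θ, T.indicator (gdens d) θ
          ∂(Measure.map (Psi d ν₂ ν₁) volume) := by
        conv_lhs => rw [hμ]
        rw [lintegral_smul_measure, smul_eq_mul]
    _ = ENNReal.ofReal J * ∫⁻ θ, T.indicator (gdens d) (Psi d ν₂ ν₁ θ) ∂volume := by
        rw [lintegral_map (hgmeas.indicator hTmeas) hΨmeas]
    _ = ENNReal.ofReal J
          * ∫⁻ θ, S.indicator (fun t => gdens d (Psi d ν₂ ν₁ t)) θ ∂volume := by
        congr 1
        apply lintegral_congr
        intro θ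
        by_cases hθ : θ ∈ S
        · rw [Set.indicator_of_mem hθ, Set.indicator_of_mem (hTS ▸ Set.mem_image_of_mem _ hθ)]
        · have hnot : Psi d ν₂ ν₁ θ ∉ T := by
            rw [hTS]
            rintro ⟨a, ha, heq⟩
            exact hθ (hinj heq ▸ ha)
          rw [Set.indicator_of_notMem hnot, Set.indicator_of_notMem hθ]
    _ ≤ ENNReal.ofReal J * ∫⁻ θ, S.indicator (fun t => C₂ * gdens d t) θ ∂volume := by
        refine mul_le_mul_right (lintegral_mono fun θ => ?_) _
        by_cases hθ : θ ∈ S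
        · rw [Set.indicator_of_mem hθ, Set.indicator_of_mem hθ]
          exact hpoint θ hθ
        · rw [Set.indicator_of_notMem hθ, Set.indicator_of_notMem hθ]
    _ = ENNReal.ofReal J * ∫⁻ θ in S, C₂ * gdens d θ ∂volume := by
        rw [lintegral_indicator hSmeas]
    _ = ENNReal.ofReal J * (C₂ * ∫⁻ θ in S, gdens d θ ∂volume) := by
        rw [lintegral_const_mul' _ _ ENNReal.ofReal_ne_top]
    _ = (ENNReal.ofReal J * C₂) * ∫⁻ θ in S, gdens d θ ∂volume := by rw [mul_assoc]
    _ = (ENNReal.ofReal J * C₂) * nvol {p : (Fin d → ℝ) × Matrix (Fin d) (Fin d) ℝ |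
          p.2.PosDef ∧ approx γ (Real.sqrt d * γ) τ p (0, 1)} := by rw [nvol_eq, hproj1]
    _ ≤ ENNReal.ofReal (ν₁ ^ (2 * d ^ 2) * ν₂ ^ d) *
        nvol {p : (Fin d → ℝ) × Matrix (Fin d) (Fin d) ℝ |
          p.2.PosDef ∧ approx γ (Real.sqrt d * γ) τ p (0, 1)} :=
        mul_le_mul_left (const_bound d hν₁ hν₂) _

end
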